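/- arXiv:1502.00874 — 3 statements merged into one kernel-verified Lean document; each statement's English description precedes it below -/
import Mathlib

section
/- Comparison principle for the ε-mean curvature flow of graphs on the Heisenberg group: let ε ≥ 0, Ω ⊂ ℝ³ bounded open, T > 0, Q = Ω×(0,T). Suppose v, w are bounded, continuous on Q̄, continuously differentiable in t and twice continuously differentiable in x in Q, and satisfy ∂_t v ≤ Σ_{i,j=1}^3 a_{ij}(∇_ε v) X_i^ε X_j^ε v (subsolution) and ∂_t w ≥ Σ_{i,j=1}^3 a_{ij}(∇_ε w) X_i^ε X_j^ε w (supersolution) in Q. If v ≤ w on the parabolic boundary ∂_pQ, then v(x,t) ≤ w(x,t) for all (x,t) ∈ Q. -/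
open Real Set Finset

noncomputable section

/-- Points of the Heisenberg group `ℍ¹ = ℝ³`. -/
abbrev Pt := Fin 3 → ℝ

/-- The Heisenberg group law. -/
def hmul (x y : Pt) : Pt :=
  ![x 0 + y 0, x 1 + y 1, x 2 + y 2 - (x 1 * y 0 - x 0 * y 1)]

/-- Euclidean partial derivative `∂ᵢ`. -/
def pd (i : Fin 3) (f : Pt → ℝ) (x : Pt) : ℝ := fderiv ℝ f x (Pi.single i 1)

/-- The left invariant frame `X₁ = ∂₁ − x₂∂₃`, `X₂ = ∂₂ + x₁∂₃`, `X₃ = 2∂₃`. -/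
def X1 (f : Pt → ℝ) (x : Pt) : ℝ := pd 0 f x - x 1 * pd 2 f x

def X2 (f : Pt → ℝ) (x : Pt) : ℝ := pd 1 f x + x 0 * pd 2 f x

def X3 (f : Pt → ℝ) (x : Pt) : ℝ := 2 * pd 2 f x

/-- The left invariant frame, indexed. -/
def XL (i : Fin 3) : (Pt → ℝ) → Pt → ℝ := ![X1, X2, X3] i

/-- The right invariant frame `X₁^r = ∂₁ + x₂∂₃`, `X₂^r = ∂₂ − x₁∂₃`, `X₃^r = 2∂₃`. -/
def X1r (f : Pt → ℝ) (x : Pt) : ℝ := pd 0 f x + x 1 * pd 2 f x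

def X2r (f : Pt → ℝ) (x : Pt) : ℝ := pd 1 f x - x 0 * pd 2 f x

def X3r (f : Pt → ℝ) (x : Pt) : ℝ := 2 * pd 2 f x

/-- The right invariant frame, indexed. -/
def XR (i : Fin 3) : (Pt → ℝ) → Pt → ℝ := ![X1r, X2r, X3r] i

/-- The ε-frame `X₁^ε = X₁`, `X₂^ε = X₂`, `X₃^ε = εX₃`. -/
def Xe (ε : ℝ) (i : Fin 3) : (Pt → ℝ) → Pt → ℝ :=
  ![X1, X2, fun f x => ε * X3 f x] i

/-- The ε-gradient `∇_εf = (X₁^εf, X₂^εf, X₃^εf)`. -/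
def gradE (ε : ℝ) (f : Pt → ℝ) (x : Pt) : Pt := fun i => Xe ε i f x

/-- `a_{ij}(ξ) = δ_{ij} − ξ_iξ_j/(1+|ξ|²)`. -/
def aCoef (ξ : Pt) (i j : Fin 3) : ℝ :=
  (if i = j then 1 else 0) - ξ i * ξ j / (1 + ∑ k, ξ k ^ 2)

/-! ### Auxiliary material for the proof -/

/-- If `h` has derivative `g` near `0`, `g` has derivative `c` at `0`, and `h` has a local
maximum at `0`, then `c ≤ 0` (second derivative test, necessary direction). -/
lemma second_deriv_nonpos {h g : ℝ → ℝ} {c : ℝ}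
    (hd : ∀ᶠ s in nhds 0, HasDerivAt h (g s) s)
    (hg : HasDerivAt g c 0) (hmax : IsLocalMax h 0) : c ≤ 0 := by
  by_contra hc
  push_neg at hc
  have hg0 : g 0 = 0 := hmax.hasDerivAt_eq_zero hd.self_of_nhds
  have hslope : Filter.Tendsto (slope g 0) (nhdsWithin 0 {(0:ℝ)}ᶜ) (nhds c) :=
    hasDerivAt_iff_tendsto_slope.1 hg
  have hE3 : ∀ᶠ s in nhdsWithin 0 {(0:ℝ)}ᶜ, c / 2 < slope g 0 s :=
    hslope (Ioi_mem_nhds (by linarith))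
  rw [eventually_nhdsWithin_iff] at hE3
  obtain ⟨δ, hδ, hP⟩ := Metric.eventually_nhds_iff.1 ((hd.and hmax).and hE3)
  set b := δ / 2 with hb
  have hbpos : 0 < b := by rw [hb]; linarith
  have hbδ : ∀ s ∈ Icc (0:ℝ) b, dist s 0 < δ := by
    intro s hs
    rw [Real.dist_eq, sub_zero, abs_of_nonneg hs.1]
    have := hs.2; simp only [hb] at this ⊢; linarith
  have hmono : StrictMonoOn h (Icc 0 b) := by
    apply strictMonoOn_of_deriv_pos (convex_Icc 0 b)
    · intro s hs
      exact ((hP (hbδ s hs)).1.1.continuousAt).continuousWithinAt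
    · intro s hs
      rw [interior_Icc] at hs
      have hsδ : dist s 0 < δ := hbδ s ⟨hs.1.le, hs.2.le⟩
      have hgs : c / 2 < slope g 0 s := (hP hsδ).2 (ne_of_gt hs.1)
      rw [slope_def_field, hg0, sub_zero, sub_zero, lt_div_iff₀ hs.1] at hgs
      rw [(hP hsδ).1.1.deriv]
      nlinarith [hs.1]
  have hlt : h 0 < h b :=
    hmono (left_mem_Icc.2 hbpos.le) (right_mem_Icc.2 hbpos.le) hbpos
  have hle : h b ≤ h 0 := (hP (hbδ b (right_mem_Icc.2 hbpos.le))).1.2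
  linarith

lemma pt_expand (y : Pt) :
    y = y 0 • (Pi.single 0 1 : Pt) + y 1 • (Pi.single 1 1 : Pt) + y 2 • (Pi.single 2 1 : Pt) := by
  ext j
  fin_cases j <;> simp [Pi.single_apply]

lemma bilin_expand (Φ : Pt →L[ℝ] Pt →L[ℝ] ℝ) (y : Pt) :
    Φ y y = ∑ k, ∑ l, y k * y l * Φ (Pi.single k 1) (Pi.single l 1) := by
  conv_lhs => rw [pt_expand y]
  simp only [map_add, map_smul, ContinuousLinearMap.add_apply,
    ContinuousLinearMap.smul_apply, smul_eq_mul, Fin.sum_univ_three]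
  ring

/-- At a local maximum of a `C²` function the second derivative is nonpositive
as a quadratic form. -/
lemma quad_nonpos_of_localmax {Ω : Set Pt} (hΩ : IsOpen Ω) {f : Pt → ℝ} {x₀ : Pt}
    (hx : x₀ ∈ Ω) (hf : ContDiffOn ℝ 2 f Ω) (hmax : IsLocalMax f x₀) (y : Pt) :
    fderiv ℝ (fderiv ℝ f) x₀ y y ≤ 0 := by
  set L : ℝ → Pt := fun s => x₀ + s • y with hLdef
  have hL0 : L 0 = x₀ := by simp [hLdef]
  have hLc : Continuous L := by continuity
  have hLtend : Filter.Tendsto L (nhds 0) (nhds x₀) := by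
    rw [← hL0]; exact hLc.continuousAt
  have hLd : ∀ s : ℝ, HasDerivAt L y s := by
    intro s
    have : HasDerivAt (fun s : ℝ => s • y) ((1:ℝ) • y) s := (hasDerivAt_id s).smul_const y
    simpa [hLdef, one_smul] using this.const_add x₀
  have hnb : ∀ᶠ s in nhds 0, L s ∈ Ω := hLtend (hΩ.mem_nhds hx)
  have hfd1 : DifferentiableAt ℝ (fderiv ℝ f) x₀ :=
    (((hf.contDiffAt (hΩ.mem_nhds hx)).fderiv_right (m := 1) one_add_one_eq_two.le).differentiableAt one_ne_zero)
  have hd : ∀ᶠ s in nhds 0, HasDerivAt (f ∘ L) (fderiv ℝ f (L s) y) s := by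
    filter_upwards [hnb] with s hs
    have hfs : HasFDerivAt f (fderiv ℝ f (L s)) (L s) :=
      (((hf.contDiffAt (hΩ.mem_nhds hs)).differentiableAt (by norm_num))).hasFDerivAt
    exact hfs.comp_hasDerivAt s (hLd s)
  have hg : HasDerivAt (fun s => fderiv ℝ f (L s) y) (fderiv ℝ (fderiv ℝ f) x₀ y y) 0 := by
    have h1 : HasFDerivAt (fderiv ℝ f) (fderiv ℝ (fderiv ℝ f) x₀) x₀ := hfd1.hasFDerivAt
    have h1' : HasFDerivAt (fderiv ℝ f) (fderiv ℝ (fderiv ℝ f) x₀) (L 0) := by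
      rw [hL0]; exact h1
    have h2 : HasDerivAt (fun s => fderiv ℝ f (L s)) (fderiv ℝ (fderiv ℝ f) x₀ y) 0 :=
      h1'.comp_hasDerivAt 0 (hLd 0)
    have h3 := h2.clm_apply (hasDerivAt_const 0 y)
    simpa using h3
  have hmax' : IsLocalMax (f ∘ L) 0 := by
    have : ∀ᶠ s in nhds 0, f (L s) ≤ f x₀ := hLtend.eventually hmax
    simpa [IsLocalMax, IsMaxFilter, hL0] using this
  exact second_deriv_nonpos hd hg hmax'

/-- The (formal) Hessian matrix. -/
def Hmat (f : Pt → ℝ) (x : Pt) (k l : Fin 3) : ℝ :=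
  fderiv ℝ (fderiv ℝ f) x (Pi.single k 1) (Pi.single l 1)

/-- The coefficients of the ε-frame in the Euclidean frame. -/
def sig (ε : ℝ) (x : Pt) : Fin 3 → Fin 3 → ℝ := ![![1,0,-(x 1)],![0,1,x 0],![0,0,2*ε]]

/-- First order correction coefficients. -/
def dcoef : Fin 3 → Fin 3 → ℝ := ![![0,-1,0],![1,0,0],![0,0,0]]

lemma Xe_eq_sum (ε : ℝ) (h : Pt → ℝ) (x : Pt) (i : Fin 3) :
    Xe ε i h x = ∑ k, sig ε x i k * pd k h x := by
  fin_cases i <;> simp [Xe, X1, X2, X3, sig, Fin.sum_univ_three] <;> ring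

lemma hasfd_pd {Ω : Set Pt} {g : Pt → ℝ} {x₀ : Pt}
    (hΩ : IsOpen Ω) (hx : x₀ ∈ Ω) (hg : ContDiffOn ℝ 2 g Ω) (l : Fin 3) :
    HasFDerivAt (pd l g)
      ((ContinuousLinearMap.apply ℝ ℝ (Pi.single l 1 : Pt)).comp
        (fderiv ℝ (fderiv ℝ g) x₀)) x₀ := by
  have hfd1 : DifferentiableAt ℝ (fderiv ℝ g) x₀ :=
    ((hg.contDiffAt (hΩ.mem_nhds hx)).fderiv_right (m := 1) one_add_one_eq_two.le).differentiableAt one_ne_zero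
  exact (ContinuousLinearMap.apply ℝ ℝ (Pi.single l 1 : Pt)).hasFDerivAt.comp x₀
    hfd1.hasFDerivAt

lemma pd_Xe {Ω : Set Pt} {g : Pt → ℝ} {x₀ : Pt}
    (hΩ : IsOpen Ω) (hx : x₀ ∈ Ω) (hg : ContDiffOn ℝ 2 g Ω) (ε : ℝ) (j k : Fin 3) :
    pd k (Xe ε j g) x₀ =
      ∑ l, sig ε x₀ j l * Hmat g x₀ k l + dcoef j k * pd 2 g x₀ := by
  have A := fun l => hasfd_pd hΩ hx hg (l := l)
  have hproj : ∀ b : Fin 3, HasFDerivAt (fun y : Pt => y b)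
      (ContinuousLinearMap.proj b : Pt →L[ℝ] ℝ) x₀ :=
    fun b => (ContinuousLinearMap.proj b : Pt →L[ℝ] ℝ).hasFDerivAt
  fin_cases j
  · show pd k (X1 g) x₀ = ∑ l, sig ε x₀ 0 l * Hmat g x₀ k l + dcoef 0 k * pd 2 g x₀
    have hX : X1 g = fun y => pd 0 g y - y 1 * pd 2 g y := rfl
    have h0 := (A 0).sub ((hproj 1).mul (A 2))
    rw [hX]
    show (fderiv ℝ (fun y => pd 0 g y - y 1 * pd 2 g y) x₀) (Pi.single k 1) = _
    rw [show (fun y => pd 0 g y - y 1 * pd 2 g y) = pd 0 g - (fun y => y 1) * pd 2 g from rfl,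
      h0.fderiv]
    fin_cases k <;>
      simp [Hmat, sig, dcoef, Fin.sum_univ_three, Pi.single_apply, pd] <;> ring
  · show pd k (X2 g) x₀ = ∑ l, sig ε x₀ 1 l * Hmat g x₀ k l + dcoef 1 k * pd 2 g x₀
    have hX : X2 g = fun y => pd 1 g y + y 0 * pd 2 g y := rfl
    have h0 := (A 1).add ((hproj 0).mul (A 2))
    rw [hX]
    show (fderiv ℝ (fun y => pd 1 g y + y 0 * pd 2 g y) x₀) (Pi.single k 1) = _
    rw [show (fun y => pd 1 g y + y 0 * pd 2 g y) = pd 1 g + (fun y => y 0) * pd 2 g from rfl,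
      h0.fderiv]
    fin_cases k <;>
      simp [Hmat, sig, dcoef, Fin.sum_univ_three, Pi.single_apply, pd] <;> ring
  · show pd k (fun x => ε * X3 g x) x₀ = ∑ l, sig ε x₀ 2 l * Hmat g x₀ k l + dcoef 2 k * pd 2 g x₀
    have hX : (fun x => ε * X3 g x) = fun y => ε * (2 * pd 2 g y) := rfl
    have h0 := ((A 2).const_mul 2).const_mul ε
    rw [hX]
    show (fderiv ℝ (fun y => ε * (2 * pd 2 g y)) x₀) (Pi.single k 1) = _
    rw [h0.fderiv]
    fin_cases k <;>
      simp [Hmat, sig, dcoef, Fin.sum_univ_three, Pi.single_apply, pd,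
        Matrix.vecHead, Matrix.vecTail] <;>
      try ring

/-- Second order ε-frame derivatives in terms of the Hessian, with first order correction. -/
lemma frame_second {Ω : Set Pt} {g : Pt → ℝ} {x₀ : Pt}
    (hΩ : IsOpen Ω) (hx : x₀ ∈ Ω) (hg : ContDiffOn ℝ 2 g Ω) (ε : ℝ)
    (i j : Fin 3) :
    Xe ε i (Xe ε j g) x₀ =
      (∑ k, ∑ l, sig ε x₀ i k * sig ε x₀ j l * Hmat g x₀ k l) +
        (∑ k, sig ε x₀ i k * dcoef j k) * pd 2 g x₀ := by
  rw [Xe_eq_sum]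
  have hkey : ∀ k, pd k (Xe ε j g) x₀ =
      ∑ l, sig ε x₀ j l * Hmat g x₀ k l + dcoef j k * pd 2 g x₀ :=
    fun k => pd_Xe hΩ hx hg ε j k
  simp only [hkey, Fin.sum_univ_three]
  ring

/-- The key algebraic inequality: `a_{ij}` is positive semidefinite in the relevant sense. -/
lemma alg_nonpos (ξ : Pt) (H : Fin 3 → Fin 3 → ℝ)
    (hq : ∀ y : Pt, ∑ k, ∑ l, y k * y l * H k l ≤ 0) (s : Fin 3 → Pt) :
    ∑ i, ∑ j, aCoef ξ i j * (∑ k, ∑ l, s i k * s j l * H k l) ≤ 0 := by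
  set Q : Pt → Pt → ℝ := fun u v => ∑ k, ∑ l, u k * v l * H k l with hQ
  set c : ℝ := 1 + ∑ k, ξ k ^ 2 with hc
  have hcpos : 0 < c := by
    have : (0:ℝ) ≤ ∑ k, ξ k ^ 2 := Finset.sum_nonneg fun k _ => sq_nonneg _
    simp only [hc]; linarith
  have hcne : c ≠ 0 := ne_of_gt hcpos
  have hbil : ∀ (a b : ℝ) (u v : Pt),
      Q (fun m => a * u m - b * v m) (fun m => a * u m - b * v m) =
        a ^ 2 * Q u u - a * b * Q u v - a * b * Q v u + b ^ 2 * Q v v := by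
    intro a b u v
    simp only [hQ, Fin.sum_univ_three]
    ring
  have hdiag : ∀ i, c * aCoef ξ i i = c - ξ i * ξ i := by
    intro i
    simp only [aCoef, if_pos rfl, ← hc]
    field_simp
    simp
  have hoff : ∀ i j, i ≠ j → c * aCoef ξ i j = -(ξ i * ξ j) := by
    intro i j hij
    simp only [aCoef, if_neg hij, ← hc]
    field_simp
    ring
  have key : c * (∑ i, ∑ j, aCoef ξ i j * Q (s i) (s j)) =
      Q (s 0) (s 0) + Q (s 1) (s 1) + Q (s 2) (s 2) +
      Q (fun m => ξ 0 * s 1 m - ξ 1 * s 0 m) (fun m => ξ 0 * s 1 m - ξ 1 * s 0 m) +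
      Q (fun m => ξ 0 * s 2 m - ξ 2 * s 0 m) (fun m => ξ 0 * s 2 m - ξ 2 * s 0 m) +
      Q (fun m => ξ 1 * s 2 m - ξ 2 * s 1 m) (fun m => ξ 1 * s 2 m - ξ 2 * s 1 m) := by
    rw [hbil, hbil, hbil]
    simp only [Fin.sum_univ_three]
    have e2 : (∑ k, ξ k ^ 2) = ξ 0 ^ 2 + ξ 1 ^ 2 + ξ 2 ^ 2 := Fin.sum_univ_three _
    linear_combination (Q (s 0) (s 0)) * hdiag 0 + (Q (s 1) (s 1)) * hdiag 1 +
      (Q (s 2) (s 2)) * hdiag 2 +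
      (Q (s 0) (s 1)) * hoff 0 1 (by decide) + (Q (s 0) (s 2)) * hoff 0 2 (by decide) +
      (Q (s 1) (s 0)) * hoff 1 0 (by decide) + (Q (s 1) (s 2)) * hoff 1 2 (by decide) +
      (Q (s 2) (s 0)) * hoff 2 0 (by decide) + (Q (s 2) (s 1)) * hoff 2 1 (by decide) +
      (Q (s 0) (s 0) + Q (s 1) (s 1) + Q (s 2) (s 2)) * e2
  show ∑ i, ∑ j, aCoef ξ i j * Q (s i) (s j) ≤ 0
  by_contra hpos
  push_neg at hpos
  have h1 : 0 < c * ∑ i, ∑ j, aCoef ξ i j * Q (s i) (s j) := mul_pos hcpos hpos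
  have h2 : c * (∑ i, ∑ j, aCoef ξ i j * Q (s i) (s j)) ≤ 0 := by
    rw [key]
    have q0 := hq (s 0); have q1 := hq (s 1); have q2 := hq (s 2)
    have q3 := hq (fun m => ξ 0 * s 1 m - ξ 1 * s 0 m)
    have q4 := hq (fun m => ξ 0 * s 2 m - ξ 2 * s 0 m)
    have q5 := hq (fun m => ξ 1 * s 2 m - ξ 2 * s 1 m)
    exact add_nonpos (add_nonpos (add_nonpos (add_nonpos (add_nonpos q0 q1) q2) q3) q4) q5
  linarith


/-- Comparison principle for the ε-mean curvature flow of graphs on the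
Heisenberg group: a bounded subsolution lies below a bounded supersolution
provided this holds on the parabolic boundary. -/
theorem statement_8 (ε : ℝ) (hε : 0 ≤ ε) (Ω : Set Pt) (hΩo : IsOpen Ω)
    (hΩb : Bornology.IsBounded Ω) (T : ℝ) (hT : 0 < T) (v w : Pt → ℝ → ℝ)
    -- continuity on the closure of `Q = Ω × (0,T)`
    (hvc : ContinuousOn (fun q : Pt × ℝ => v q.1 q.2) (closure (Ω ×ˢ Ioo 0 T)))
    (hwc : ContinuousOn (fun q : Pt × ℝ => w q.1 q.2) (closure (Ω ×ˢ Ioo 0 T)))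
    -- boundedness
    (hvb : ∃ M, ∀ q ∈ closure (Ω ×ˢ Ioo 0 T), |v q.1 q.2| ≤ M)
    (hwb : ∃ M, ∀ q ∈ closure (Ω ×ˢ Ioo 0 T), |w q.1 q.2| ≤ M)
    -- `C¹` in time and `C²` in space inside `Q`
    (hvx : ∀ t ∈ Ioo (0 : ℝ) T, ContDiffOn ℝ 2 (fun x => v x t) Ω)
    (hvt : ∀ x ∈ Ω, ContDiffOn ℝ 1 (v x) (Ioo 0 T))
    (hwx : ∀ t ∈ Ioo (0 : ℝ) T, ContDiffOn ℝ 2 (fun x => w x t) Ω)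
    (hwt : ∀ x ∈ Ω, ContDiffOn ℝ 1 (w x) (Ioo 0 T))
    -- `v` is a subsolution and `w` a supersolution
    (hsub : ∀ x ∈ Ω, ∀ t ∈ Ioo (0 : ℝ) T,
      deriv (v x) t ≤ ∑ i, ∑ j, aCoef (gradE ε (fun y => v y t) x) i j *
        Xe ε i (Xe ε j (fun y => v y t)) x)
    (hsup : ∀ x ∈ Ω, ∀ t ∈ Ioo (0 : ℝ) T,
      ∑ i, ∑ j, aCoef (gradE ε (fun y => w y t) x) i j *
        Xe ε i (Xe ε j (fun y => w y t)) x ≤ deriv (w x) t)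
    -- `v ≤ w` on the parabolic boundary
    (hbd0 : ∀ x ∈ closure Ω, v x 0 ≤ w x 0)
    (hbd1 : ∀ x ∈ frontier Ω, ∀ t ∈ Ioo (0 : ℝ) T, v x t ≤ w x t) :
    ∀ x ∈ Ω, ∀ t ∈ Ioo (0 : ℝ) T, v x t ≤ w x t := by
  intro x hx t ht
  have main : ∀ σ : ℝ, 0 < σ → v x t - w x t - σ * t ≤ 0 := by
    intro σ hσ
    set T' : ℝ := (t + T) / 2 with hT'def
    have htT' : t < T' := by rw [hT'def]; linarith [ht.2]
    have hT'T : T' < T := by rw [hT'def]; linarith [ht.2]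
    set K : Set (Pt × ℝ) := closure Ω ×ˢ Icc 0 T' with hK
    have hKsub : K ⊆ closure (Ω ×ˢ Ioo 0 T) := by
      rw [closure_prod_eq, closure_Ioo (ne_of_lt hT)]
      exact Set.prod_mono_right (Icc_subset_Icc le_rfl hT'T.le)
    have hKcomp : IsCompact K := hΩb.isCompact_closure.prod isCompact_Icc
    set φ : Pt × ℝ → ℝ := fun q => v q.1 q.2 - w q.1 q.2 - σ * q.2 with hφ
    have hφc : ContinuousOn φ K :=
      ((hvc.mono hKsub).sub (hwc.mono hKsub)).sub
        ((continuous_const.mul continuous_snd).continuousOn)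
    have hxtK : (x, t) ∈ K := ⟨subset_closure hx, ⟨ht.1.le, htT'.le⟩⟩
    obtain ⟨q₀, hq₀K, hq₀max⟩ := hKcomp.exists_isMaxOn ⟨(x, t), hxtK⟩ hφc
    rcases le_or_gt (φ q₀) 0 with hm | hm
    · exact le_trans (hq₀max hxtK) hm
    exfalso
    obtain ⟨x₀, t₀⟩ := q₀
    obtain ⟨hx₀cl, ht₀Icc⟩ := hq₀K
    dsimp only at hx₀cl ht₀Icc
    have hmval : 0 < v x₀ t₀ - w x₀ t₀ - σ * t₀ := hm
    have ht₀pos : 0 < t₀ := by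
      rcases eq_or_lt_of_le ht₀Icc.1 with h0 | h0
      · exfalso
        have := hbd0 x₀ hx₀cl
        rw [← h0] at hmval
        simp only [mul_zero] at hmval
        linarith
      · exact h0
    have ht₀T : t₀ ∈ Ioo (0:ℝ) T := ⟨ht₀pos, lt_of_le_of_lt ht₀Icc.2 hT'T⟩
    have hx₀Ω : x₀ ∈ Ω := by
      by_contra hxn
      have hfr : x₀ ∈ frontier Ω := by
        rw [frontier, hΩo.interior_eq]; exact ⟨hx₀cl, hxn⟩
      have := hbd1 x₀ hfr t₀ ht₀T
      nlinarith [mul_pos hσ ht₀pos]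
    have hΩnbhd : Ω ∈ nhds x₀ := hΩo.mem_nhds hx₀Ω
    have htIoo : Ioo (0:ℝ) T ∈ nhds t₀ := isOpen_Ioo.mem_nhds ht₀T
    -- local max in space
    have hlocmax : IsLocalMax (fun y => v y t₀ - w y t₀) x₀ := by
      filter_upwards [hΩnbhd] with y hy
      have h1 := hq₀max (show (y, t₀) ∈ K from ⟨subset_closure hy, ht₀Icc⟩)
      simp only [hφ, Set.mem_setOf_eq] at h1
      show v y t₀ - w y t₀ ≤ v x₀ t₀ - w x₀ t₀
      linarith
    -- time derivative inequality
    have hvdiff : DifferentiableAt ℝ (v x₀) t₀ :=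
      ((hvt x₀ hx₀Ω).contDiffAt htIoo).differentiableAt one_ne_zero
    have hwdiff : DifferentiableAt ℝ (w x₀) t₀ :=
      ((hwt x₀ hx₀Ω).contDiffAt htIoo).differentiableAt one_ne_zero
    have hψ : HasDerivAt (fun s => v x₀ s - w x₀ s - σ * s)
        (deriv (v x₀) t₀ - deriv (w x₀) t₀ - σ) t₀ := by
      have h1 := (hvdiff.hasDerivAt.sub hwdiff.hasDerivAt)
      have h2 : HasDerivAt (fun s : ℝ => σ * s) σ t₀ := by
        simpa using (hasDerivAt_id t₀).const_mul σ
      exact h1.sub h2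
    have htslope : σ ≤ deriv (v x₀) t₀ - deriv (w x₀) t₀ := by
      have hsl := hasDerivAt_iff_tendsto_slope.1 hψ
      have hsl' : Filter.Tendsto (slope (fun s => v x₀ s - w x₀ s - σ * s) t₀)
          (nhdsWithin t₀ (Iio t₀))
          (nhds (deriv (v x₀) t₀ - deriv (w x₀) t₀ - σ)) :=
        hsl.mono_left (nhdsWithin_mono t₀ (fun s hs => ne_of_lt hs))
      have hev : ∀ᶠ s in nhdsWithin t₀ (Iio t₀),
          0 ≤ slope (fun s => v x₀ s - w x₀ s - σ * s) t₀ s := by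
        filter_upwards [Ioo_mem_nhdsLT_of_mem
          (show t₀ ∈ Ioc (0:ℝ) t₀ from ⟨ht₀pos, le_rfl⟩)] with s hs
        have hsK : (x₀, s) ∈ K := ⟨hx₀cl, ⟨hs.1.le, hs.2.le.trans ht₀Icc.2⟩⟩
        have h1 := hq₀max hsK
        simp only [hφ, Set.mem_setOf_eq] at h1
        rw [slope_def_field]
        apply div_nonneg_of_nonpos
        · linarith
        · linarith [hs.2]
      have := ge_of_tendsto hsl' hev
      linarith
    -- spatial part
    have hfC2 : ContDiffOn ℝ 2 (fun y => v y t₀ - w y t₀) Ω :=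
      (hvx t₀ ht₀T).sub (hwx t₀ ht₀T)
    have hDf : fderiv ℝ (fun y => v y t₀ - w y t₀) x₀ = 0 := hlocmax.fderiv_eq_zero
    have hvdx : DifferentiableAt ℝ (fun y => v y t₀) x₀ :=
      ((hvx t₀ ht₀T).contDiffAt hΩnbhd).differentiableAt (by norm_num)
    have hwdx : DifferentiableAt ℝ (fun y => w y t₀) x₀ :=
      ((hwx t₀ ht₀T).contDiffAt hΩnbhd).differentiableAt (by norm_num)
    have hfd : fderiv ℝ (fun y => v y t₀) x₀ = fderiv ℝ (fun y => w y t₀) x₀ := by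
      have hs := fderiv_fun_sub hvdx hwdx
      rw [hDf] at hs
      have := hs.symm
      rwa [sub_eq_zero] at this
    have hpd : ∀ l, pd l (fun y => v y t₀) x₀ = pd l (fun y => w y t₀) x₀ := by
      intro l; unfold pd; rw [hfd]
    have hgrad : gradE ε (fun y => v y t₀) x₀ = gradE ε (fun y => w y t₀) x₀ := by
      funext i
      fin_cases i <;>
        simp [gradE, Xe, X1, X2, X3, hpd 0, hpd 1, hpd 2]
    -- Hessian difference
    have hvfd1 : DifferentiableAt ℝ (fderiv ℝ (fun y => v y t₀)) x₀ :=
      (((hvx t₀ ht₀T).contDiffAt hΩnbhd).fderiv_right (m := 1) one_add_one_eq_two.le).differentiableAt one_ne_zero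
    have hwfd1 : DifferentiableAt ℝ (fderiv ℝ (fun y => w y t₀)) x₀ :=
      (((hwx t₀ ht₀T).contDiffAt hΩnbhd).fderiv_right (m := 1) one_add_one_eq_two.le).differentiableAt one_ne_zero
    have hfev : fderiv ℝ (fun y => v y t₀ - w y t₀) =ᶠ[nhds x₀]
        fun y => fderiv ℝ (fun z => v z t₀) y - fderiv ℝ (fun z => w z t₀) y := by
      filter_upwards [hΩnbhd] with y hy
      exact fderiv_sub
        (((hvx t₀ ht₀T).contDiffAt (hΩo.mem_nhds hy)).differentiableAt (by norm_num))
        (((hwx t₀ ht₀T).contDiffAt (hΩo.mem_nhds hy)).differentiableAt (by norm_num))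
    have hHf : ∀ k l, Hmat (fun y => v y t₀ - w y t₀) x₀ k l =
        Hmat (fun y => v y t₀) x₀ k l - Hmat (fun y => w y t₀) x₀ k l := by
      intro k l
      unfold Hmat
      rw [hfev.fderiv_eq, fderiv_fun_sub hvfd1 hwfd1]
      simp
    -- quadratic form nonpositivity
    have hquad : ∀ y : Pt,
        ∑ k, ∑ l, y k * y l * Hmat (fun y => v y t₀ - w y t₀) x₀ k l ≤ 0 := by
      intro y
      have h1 := quad_nonpos_of_localmax hΩo hx₀Ω hfC2 hlocmax y
      rw [bilin_expand] at h1
      simpa only [Hmat] using h1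
    have hsum := alg_nonpos (gradE ε (fun y => v y t₀) x₀)
      (Hmat (fun y => v y t₀ - w y t₀) x₀) hquad (sig ε x₀)
    -- second order frame terms
    have hXXv := frame_second hΩo hx₀Ω (hvx t₀ ht₀T) ε
    have hXXw := frame_second hΩo hx₀Ω (hwx t₀ ht₀T) ε
    have hdiffXX : ∀ i j, Xe ε i (Xe ε j (fun y => v y t₀)) x₀ -
        Xe ε i (Xe ε j (fun y => w y t₀)) x₀ =
        ∑ k, ∑ l, sig ε x₀ i k * sig ε x₀ j l *
          Hmat (fun y => v y t₀ - w y t₀) x₀ k l := by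
      intro i j
      rw [hXXv i j, hXXw i j, hpd 2]
      simp only [hHf]
      simp only [Fin.sum_univ_three]
      ring
    have hEq : (∑ i, ∑ j, aCoef (gradE ε (fun y => v y t₀) x₀) i j *
          Xe ε i (Xe ε j (fun y => v y t₀)) x₀) -
        (∑ i, ∑ j, aCoef (gradE ε (fun y => v y t₀) x₀) i j *
          Xe ε i (Xe ε j (fun y => w y t₀)) x₀) =
        ∑ i, ∑ j, aCoef (gradE ε (fun y => v y t₀) x₀) i j *
          (∑ k, ∑ l, sig ε x₀ i k * sig ε x₀ j l *
            Hmat (fun y => v y t₀ - w y t₀) x₀ k l) := by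
      rw [← Finset.sum_sub_distrib]
      refine Finset.sum_congr rfl fun i _ => ?_
      rw [← Finset.sum_sub_distrib]
      refine Finset.sum_congr rfl fun j _ => ?_
      rw [← mul_sub, hdiffXX i j]
    have h1 := hsub x₀ hx₀Ω t₀ ht₀T
    have h2 := hsup x₀ hx₀Ω t₀ ht₀T
    rw [← hgrad] at h2
    linarith
  by_contra hcon
  push_neg at hcon
  have hd : 0 < v x t - w x t := by linarith
  have ht0 : t ≠ 0 := ne_of_gt ht.1
  have h := main ((v x t - w x t) / (2 * t)) (div_pos hd (by linarith [ht.1]))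
  have he : (v x t - w x t) / (2 * t) * t = (v x t - w x t) / 2 := by
    field_simp
  linarith

end
end

section
/- Let ε ∈ (0,1], Ω ⊂ ℝ³ open, T > 0, and let u ∈ C³(Ω×(0,T)) solve the mean curvature flow equation ∂_t u = Σ_{i,j=1}^3 a_{ij}(∇_ε u) X_i^ε X_j^ε u on the Heisenberg group. Then the functions v₀ = ∂_t u and v_h = X_h^r u (h = 1,2,3) each solve the linearized equation ∂_t v = Σ_{i,j=1}^3 a_{ij}(∇_ε u) X_i^ε X_j^ε v + Σ_{i,j,k=1}^3 (∂_{ξ_k} a_{ij})(∇_ε u) · (X_i^ε X_j^ε u) · X_k^ε v on Ω×(0,T). -/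
open Real Set Finset

noncomputable section

/-- `∂_{ξ_h} a_{ij}(ξ)`, the partial derivative of the coefficient matrix. -/
def aCoefD (h : Fin 3) (ξ : Pt) (i j : Fin 3) : ℝ :=
  fderiv ℝ (fun η => aCoef η i j) ξ (Pi.single h 1)

/-! ### Auxiliary framework: affine vector fields on spacetime `Pt × ℝ` -/

section Aux

open Filter Topology

/-- The third spatial basis direction in spacetime. -/
def e2S : Pt × ℝ := (Pi.single 2 1, 0)

/-- An affine vector field on spacetime of the form `q ↦ C + φ(q) • e₂`. -/
structure Fld where
  C : Pt × ℝ
  phi : (Pt × ℝ) →L[ℝ] ℝ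

namespace Fld

def V (W : Fld) (q : Pt × ℝ) : Pt × ℝ := W.C + W.phi q • e2S

def Lm (W : Fld) : (Pt × ℝ) →L[ℝ] (Pt × ℝ) := W.phi.smulRight e2S

lemma hasFDerivAt_V (W : Fld) (q : Pt × ℝ) : HasFDerivAt W.V W.Lm q := by
  exact ((W.phi.hasFDerivAt (x := q)).smul_const e2S).const_add W.C

lemma contDiff_V (W : Fld) : ContDiff ℝ 2 W.V :=
  contDiff_const.add (W.phi.contDiff.smul contDiff_const)

/-- The first-order differential operator attached to an affine field. -/
def DW (W : Fld) (f : Pt × ℝ → ℝ) (q : Pt × ℝ) : ℝ := fderiv ℝ f q (W.V q)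

end Fld

def prj (k : Fin 3) : (Pt × ℝ) →L[ℝ] ℝ :=
  (ContinuousLinearMap.proj k).comp (ContinuousLinearMap.fst ℝ Pt ℝ)

/-- The ε-frame as affine spacetime fields. -/
def fXe (ε : ℝ) : Fin 3 → Fld :=
  ![⟨(Pi.single 0 1, 0), -prj 1⟩, ⟨(Pi.single 1 1, 0), prj 0⟩, ⟨(2 * ε) • e2S, 0⟩]

/-- The right-invariant frame as affine spacetime fields. -/
def fXR : Fin 3 → Fld :=
  ![⟨(Pi.single 0 1, 0), prj 1⟩, ⟨(Pi.single 1 1, 0), -prj 0⟩, ⟨(2 : ℝ) • e2S, 0⟩]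

/-- The time field `∂_t`. -/
def fT : Fld := ⟨(0, 1), 0⟩

lemma br_XeXR (ε : ℝ) (i h : Fin 3) (q : Pt × ℝ) :
    (fXe ε i).Lm ((fXR h).V q) = (fXR h).Lm ((fXe ε i).V q) := by
  fin_cases i <;> fin_cases h <;>
    simp [Fld.Lm, Fld.V, fXe, fXR, prj, e2S, Pi.single_apply]

lemma br_XeT (ε : ℝ) (i : Fin 3) (q : Pt × ℝ) :
    (fXe ε i).Lm (fT.V q) = fT.Lm ((fXe ε i).V q) := by
  fin_cases i <;> simp [Fld.Lm, Fld.V, fXe, fT, prj, e2S, Pi.single_apply]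

lemma br_TXR (h : Fin 3) (q : Pt × ℝ) :
    fT.Lm ((fXR h).V q) = (fXR h).Lm (fT.V q) := by
  fin_cases h <;> simp [Fld.Lm, Fld.V, fXR, fT, prj, e2S, Pi.single_apply]

lemma fderiv_slice {f : Pt × ℝ → ℝ} {x : Pt} {t : ℝ} (hf : DifferentiableAt ℝ f (x, t)) :
    fderiv ℝ (fun y => f (y, t)) x
      = (fderiv ℝ f (x, t)).comp (ContinuousLinearMap.inl ℝ Pt ℝ) :=
  (hf.hasFDerivAt.comp x (hasFDerivAt_prodMk_left x t)).fderiv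

lemma Xe_eq_DW {ε : ℝ} {f : Pt × ℝ → ℝ} {x : Pt} {t : ℝ} (hf : DifferentiableAt ℝ f (x, t))
    {G : Pt → ℝ} (hG : G =ᶠ[𝓝 x] fun y => f (y, t)) (i : Fin 3) :
    Xe ε i G x = Fld.DW (fXe ε i) f (x, t) := by
  have hd : fderiv ℝ G x = (fderiv ℝ f (x, t)).comp (ContinuousLinearMap.inl ℝ Pt ℝ) := by
    rw [hG.fderiv_eq, fderiv_slice hf]
  set A := fderiv ℝ f (x, t) with hA
  have hpd : ∀ k : Fin 3, pd k G x = A (Pi.single k 1, 0) := by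
    intro k
    simp [pd, hd, ContinuousLinearMap.comp_apply, ContinuousLinearMap.inl_apply]
  have hap : ∀ W : Fld, A (W.V (x, t)) = A W.C + W.phi (x, t) * A e2S := by
    intro W
    simp [Fld.V, map_add, map_smul, smul_eq_mul]
  have key : ∀ j : Fin 3, Xe ε j G x = Fld.DW (fXe ε j) f (x, t) := by
    intro j
    fin_cases j
    · show X1 G x = Fld.DW (fXe ε 0) f (x, t)
      simp only [X1, Fld.DW, ← hA, hpd, hap, fXe, prj, e2S, Matrix.cons_val_zero,
        ContinuousLinearMap.comp_apply, ContinuousLinearMap.neg_apply,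
        ContinuousLinearMap.coe_fst', ContinuousLinearMap.proj_apply]
      ring
    · show X2 G x = Fld.DW (fXe ε 1) f (x, t)
      simp only [X2, Fld.DW, ← hA, hpd, hap, fXe, prj, e2S, Matrix.cons_val_one,
        Matrix.head_cons, Matrix.cons_val_zero, ContinuousLinearMap.comp_apply,
        ContinuousLinearMap.coe_fst', ContinuousLinearMap.proj_apply]
      try ring
    · show ε * X3 G x = Fld.DW (fXe ε 2) f (x, t)
      simp only [X3, Fld.DW, ← hA, hpd, hap, fXe, e2S, Matrix.cons_val_two, Matrix.tail_cons,
        Matrix.head_cons, map_smul, smul_eq_mul, ContinuousLinearMap.zero_apply]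
      ring
  exact key i

lemma XR_eq_DW {f : Pt × ℝ → ℝ} {x : Pt} {t : ℝ} (hf : DifferentiableAt ℝ f (x, t))
    {G : Pt → ℝ} (hG : G =ᶠ[𝓝 x] fun y => f (y, t)) (h : Fin 3) :
    XR h G x = Fld.DW (fXR h) f (x, t) := by
  have hd : fderiv ℝ G x = (fderiv ℝ f (x, t)).comp (ContinuousLinearMap.inl ℝ Pt ℝ) := by
    rw [hG.fderiv_eq, fderiv_slice hf]
  set A := fderiv ℝ f (x, t) with hA
  have hpd : ∀ k : Fin 3, pd k G x = A (Pi.single k 1, 0) := by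
    intro k
    simp [pd, hd, ContinuousLinearMap.comp_apply, ContinuousLinearMap.inl_apply]
  have hap : ∀ W : Fld, A (W.V (x, t)) = A W.C + W.phi (x, t) * A e2S := by
    intro W
    simp [Fld.V, map_add, map_smul, smul_eq_mul]
  fin_cases h
  · show X1r G x = Fld.DW (fXR 0) f (x, t)
    simp only [X1r, Fld.DW, ← hA, hpd, hap, fXR, prj, e2S, Matrix.cons_val_zero,
      ContinuousLinearMap.comp_apply, ContinuousLinearMap.coe_fst',
      ContinuousLinearMap.proj_apply]
    try ring
  · show X2r G x = Fld.DW (fXR 1) f (x, t)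
    simp only [X2r, Fld.DW, ← hA, hpd, hap, fXR, prj, e2S, Matrix.cons_val_one,
      Matrix.head_cons, Matrix.cons_val_zero, ContinuousLinearMap.comp_apply, ContinuousLinearMap.neg_apply,
      ContinuousLinearMap.coe_fst', ContinuousLinearMap.proj_apply]
    try ring
  · show X3r G x = Fld.DW (fXR 2) f (x, t)
    simp only [X3r, Fld.DW, ← hA, hpd, hap, fXR, e2S, Matrix.cons_val_two, Matrix.tail_cons,
      Matrix.head_cons, map_smul, smul_eq_mul, ContinuousLinearMap.zero_apply]
    try ring

lemma deriv_eq_DW {f : Pt × ℝ → ℝ} {x : Pt} {t : ℝ} (hf : DifferentiableAt ℝ f (x, t))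
    {G : ℝ → ℝ} (hG : G =ᶠ[𝓝 t] fun s => f (x, s)) :
    deriv G t = Fld.DW fT f (x, t) := by
  have h1 : HasDerivAt (fun s => (x, s) : ℝ → Pt × ℝ) ((0 : Pt), (1 : ℝ)) t :=
    HasDerivAt.prodMk (hasDerivAt_const t x) (hasDerivAt_id t)
  have h2 : HasDerivAt (fun s => f (x, s)) (fderiv ℝ f (x, t) ((0 : Pt), (1 : ℝ))) t :=
    hf.hasFDerivAt.comp_hasDerivAt t h1
  rw [hG.deriv_eq, h2.deriv]
  simp [Fld.DW, Fld.V, fT]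

lemma DW_congr {f g : Pt × ℝ → ℝ} {q : Pt × ℝ} (W : Fld) (h : f =ᶠ[𝓝 q] g) :
    Fld.DW W f q = Fld.DW W g q := by
  unfold Fld.DW; rw [h.fderiv_eq]

lemma fderiv_DW_apply {g : Pt × ℝ → ℝ} {q : Pt × ℝ} (hg : ContDiffAt ℝ 2 g q) (W : Fld)
    (z : Pt × ℝ) :
    fderiv ℝ (Fld.DW W g) q z
      = fderiv ℝ (fderiv ℝ g) q z (W.V q) + fderiv ℝ g q (W.Lm z) := by
  have h1 : ContDiffAt ℝ 1 (fderiv ℝ g) q := hg.fderiv_right (by norm_num)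
  have h2 : HasFDerivAt (Fld.DW W g)
      ((fderiv ℝ g q).comp W.Lm + (fderiv ℝ (fderiv ℝ g) q).flip (W.V q)) q :=
    h1.differentiableAt (by norm_num) |>.hasFDerivAt.clm_apply (W.hasFDerivAt_V q)
  rw [h2.fderiv]
  simp [ContinuousLinearMap.add_apply, ContinuousLinearMap.comp_apply,
    ContinuousLinearMap.flip_apply]
  ring

lemma DW_comm {g : Pt × ℝ → ℝ} {q : Pt × ℝ} (hg : ContDiffAt ℝ 2 g q) (W W' : Fld)
    (hbr : W.Lm (W'.V q) = W'.Lm (W.V q)) :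
    Fld.DW W (Fld.DW W' g) q = Fld.DW W' (Fld.DW W g) q := by
  have hsym := hg.isSymmSndFDerivAt (by norm_num)
  show fderiv ℝ (Fld.DW W' g) q (W.V q) = fderiv ℝ (Fld.DW W g) q (W'.V q)
  rw [fderiv_DW_apply hg W' (W.V q), fderiv_DW_apply hg W (W'.V q),
    hsym.eq (W.V q) (W'.V q), hbr]

lemma diff_aCoef (i j : Fin 3) (ξ : Pt) : DifferentiableAt ℝ (fun η => aCoef η i j) ξ := by
  have h1 : ∀ k : Fin 3, DifferentiableAt ℝ (fun η : Pt => η k) ξ := by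
    intro k
    exact differentiableAt_apply (𝕜 := ℝ) k ξ
  have hden : DifferentiableAt ℝ (fun η : Pt => 1 + ∑ k, η k ^ 2) ξ := by
    apply (differentiableAt_const (1 : ℝ)).add
    apply DifferentiableAt.fun_sum
    intro k _
    exact (h1 k).pow 2
  have hne : (1 + ∑ k, (ξ k) ^ 2) ≠ 0 := by positivity
  have hre : (fun η : Pt => aCoef η i j)
      = fun η : Pt => (if i = j then (1:ℝ) else 0)
        - (η i * η j) * (1 + ∑ k, η k ^ 2)⁻¹ := by
    funext η; rw [aCoef, div_eq_mul_inv]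
  rw [hre]
  exact (differentiableAt_const _).sub (((h1 i).mul (h1 j)).mul (hden.inv hne))

lemma clm_pi_apply (A : Pt →L[ℝ] ℝ) (w : Pt) : A w = ∑ k, w k * A (Pi.single k 1) := by
  have hw : w = w 0 • (Pi.single 0 1 : Pt) + w 1 • (Pi.single 1 1 : Pt)
      + w 2 • (Pi.single 2 1 : Pt) := by
    funext j; fin_cases j <;> simp [Pi.single_apply]
  rw [Fin.sum_univ_three]
  conv_lhs => rw [hw]
  simp [map_add, map_smul, smul_eq_mul]

lemma fderiv_aCoef_comp {G : Pt × ℝ → Pt} {q : Pt × ℝ} (hG : DifferentiableAt ℝ G q)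
    (i j : Fin 3) (z : Pt × ℝ) :
    fderiv ℝ (fun p => aCoef (G p) i j) q z
      = ∑ k, fderiv ℝ G q z k * aCoefD k (G q) i j := by
  have hc : HasFDerivAt (fun p => aCoef (G p) i j)
      ((fderiv ℝ (fun η => aCoef η i j) (G q)).comp (fderiv ℝ G q)) q :=
    (diff_aCoef i j (G q)).hasFDerivAt.comp q hG.hasFDerivAt
  rw [hc.fderiv, ContinuousLinearMap.comp_apply,
    clm_pi_apply (fderiv ℝ (fun η => aCoef η i j) (G q)) (fderiv ℝ G q z)]
  rfl

lemma diff_aCoef_comp {G : Pt × ℝ → Pt} {q : Pt × ℝ} (hG : DifferentiableAt ℝ G q)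
    (i j : Fin 3) : DifferentiableAt ℝ (fun p => aCoef (G p) i j) q :=
  (diff_aCoef i j (G q)).comp q hG

/-- The main abstract step: if `u` solves the equation and `W'` is an affine field commuting
with the ε-frame and with `∂_t`, then `v = W' u` solves the linearized equation. -/
lemma key (ε : ℝ) (Ω : Set Pt) (hΩ : IsOpen Ω) (T : ℝ) (u : Pt → ℝ → ℝ)
    (hu : ContDiffOn ℝ 3 (fun q : Pt × ℝ => u q.1 q.2) (Ω ×ˢ Ioo 0 T))
    (hpde : ∀ x ∈ Ω, ∀ t ∈ Ioo (0 : ℝ) T,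
      deriv (u x) t = ∑ i, ∑ j, aCoef (gradE ε (fun y => u y t) x) i j *
        Xe ε i (Xe ε j (fun y => u y t)) x)
    (W' : Fld)
    (hbrX : ∀ i q, (fXe ε i).Lm (W'.V q) = W'.Lm ((fXe ε i).V q))
    (hbrT : ∀ q, fT.Lm (W'.V q) = W'.Lm (fT.V q))
    (v : Pt → ℝ → ℝ)
    (hv : ∀ y s, (y, s) ∈ Ω ×ˢ Ioo (0:ℝ) T →
      v y s = Fld.DW W' (fun q : Pt × ℝ => u q.1 q.2) (y, s))
    (x : Pt) (hx : x ∈ Ω) (t : ℝ) (ht : t ∈ Ioo (0:ℝ) T) :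
    deriv (v x) t =
      (∑ i, ∑ j, aCoef (gradE ε (fun y => u y t) x) i j *
        Xe ε i (Xe ε j (fun y => v y t)) x) +
      ∑ i, ∑ j, ∑ k, aCoefD k (gradE ε (fun y => u y t) x) i j *
        Xe ε i (Xe ε j (fun y => u y t)) x * Xe ε k (fun y => v y t) x := by
  set F : Pt × ℝ → ℝ := fun q => u q.1 q.2 with hFdef
  set U : Set (Pt × ℝ) := Ω ×ˢ Ioo 0 T with hUdef
  have hUo : IsOpen U := hΩ.prod isOpen_Ioo
  have hq0 : (x, t) ∈ U := ⟨hx, ht⟩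
  have hF3 : ∀ q ∈ U, ContDiffAt ℝ 3 F q := fun q hq => hu.contDiffAt (hUo.mem_nhds hq)
  have hF2 : ∀ q ∈ U, ContDiffAt ℝ 2 F q := fun q hq => (hF3 q hq).of_le (by norm_num)
  have hFdiff : ∀ q ∈ U, DifferentiableAt ℝ F q :=
    fun q hq => (hF2 q hq).differentiableAt (by norm_num)
  have hfd2 : ContDiffOn ℝ 2 (fderiv ℝ F) U := hu.fderiv_of_isOpen hUo (by norm_num)
  have hDW1 : ∀ W : Fld, ContDiffOn ℝ 2 (Fld.DW W F) U :=
    fun W => hfd2.clm_apply W.contDiff_V.contDiffOn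
  have hDW1At : ∀ (W : Fld), ∀ q ∈ U, ContDiffAt ℝ 2 (Fld.DW W F) q :=
    fun W q hq => (hDW1 W).contDiffAt (hUo.mem_nhds hq)
  have hDW1d : ∀ (W : Fld), ∀ q ∈ U, DifferentiableAt ℝ (Fld.DW W F) q :=
    fun W q hq => (hDW1At W q hq).differentiableAt (by norm_num)
  have hDW2d : ∀ (W W2 : Fld), ∀ q ∈ U, DifferentiableAt ℝ (Fld.DW W (Fld.DW W2 F)) q := by
    intro W W2 q hq
    have h : ContDiffOn ℝ 1 (Fld.DW W (Fld.DW W2 F)) U :=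
      ((hDW1 W2).fderiv_of_isOpen hUo (by norm_num)).clm_apply
        (W.contDiff_V.of_le (by norm_num)).contDiffOn
    exact (h.contDiffAt (hUo.mem_nhds hq)).differentiableAt (by norm_num)
  -- slice conversions for u
  have hXe1 : ∀ y s, (y, s) ∈ U → ∀ i, Xe ε i (fun z => u z s) y = Fld.DW (fXe ε i) F (y, s) :=
    fun y s hq i => Xe_eq_DW (hFdiff _ hq) (Filter.Eventually.of_forall fun z => rfl) i
  have hXe2 : ∀ y s, (y, s) ∈ U → ∀ i j, Xe ε i (Xe ε j (fun z => u z s)) y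
      = Fld.DW (fXe ε i) (Fld.DW (fXe ε j) F) (y, s) := by
    intro y s hq i j
    apply Xe_eq_DW (hDW1d (fXe ε j) _ hq)
    filter_upwards [hΩ.mem_nhds hq.1] with z hz
    exact hXe1 z s ⟨hz, hq.2⟩ j
  have hgrad : ∀ y s, (y, s) ∈ U → gradE ε (fun z => u z s) y
      = fun k => Fld.DW (fXe ε k) F (y, s) := by
    intro y s hq; funext k; exact hXe1 y s hq k
  have hT1 : ∀ y s, (y, s) ∈ U → deriv (u y) s = Fld.DW fT F (y, s) :=
    fun y s hq => deriv_eq_DW (hFdiff _ hq) (Filter.Eventually.of_forall fun s' => rfl)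
  have hpde' : ∀ q ∈ U, Fld.DW fT F q
      = ∑ i, ∑ j, aCoef (fun k => Fld.DW (fXe ε k) F q) i j
          * Fld.DW (fXe ε i) (Fld.DW (fXe ε j) F) q := by
    rintro ⟨y, s⟩ hq
    rw [← hT1 y s hq, hpde y hq.1 s hq.2]
    simp only [hgrad y s hq, hXe2 y s hq]
  -- slice conversions for v
  have hgv2 : ∀ y s, (y, s) ∈ U → ∀ j, Xe ε j (fun z => v z s) y
      = Fld.DW (fXe ε j) (Fld.DW W' F) (y, s) := by
    intro y s hq j
    apply Xe_eq_DW (hDW1d W' _ hq)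
    filter_upwards [hΩ.mem_nhds hq.1] with z hz
    exact hv z s ⟨hz, hq.2⟩
  have hswapJ : ∀ (j : Fin 3), ∀ q ∈ U,
      Fld.DW (fXe ε j) (Fld.DW W' F) q = Fld.DW W' (Fld.DW (fXe ε j) F) q :=
    fun j q hq => DW_comm (hF2 q hq) (fXe ε j) W' (hbrX j q)
  have hgv1 : ∀ k, Xe ε k (fun z => v z t) x = Fld.DW W' (Fld.DW (fXe ε k) F) (x, t) :=
    fun k => (hgv2 x t hq0 k).trans (hswapJ k _ hq0)
  have hgv3 : ∀ i j, Xe ε i (Xe ε j (fun z => v z t)) x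
      = Fld.DW W' (Fld.DW (fXe ε i) (Fld.DW (fXe ε j) F)) (x, t) := by
    intro i j
    have h1 : Xe ε i (Xe ε j (fun z => v z t)) x
        = Fld.DW (fXe ε i) (Fld.DW (fXe ε j) (Fld.DW W' F)) (x, t) := by
      apply Xe_eq_DW (hDW2d (fXe ε j) W' _ hq0)
      filter_upwards [hΩ.mem_nhds hx] with z hz
      exact hgv2 z t ⟨hz, ht⟩ j
    have h2 : Fld.DW (fXe ε i) (Fld.DW (fXe ε j) (Fld.DW W' F)) (x, t)
        = Fld.DW (fXe ε i) (Fld.DW W' (Fld.DW (fXe ε j) F)) (x, t) := by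
      apply DW_congr
      filter_upwards [hUo.mem_nhds hq0] with q hq
      exact hswapJ j q hq
    rw [h1, h2]
    exact DW_comm (hDW1At (fXe ε j) _ hq0) (fXe ε i) W' (hbrX i (x, t))
  have hdv : deriv (v x) t = Fld.DW W' (Fld.DW fT F) (x, t) := by
    have h1 : deriv (v x) t = Fld.DW fT (Fld.DW W' F) (x, t) := by
      apply deriv_eq_DW (hDW1d W' _ hq0)
      filter_upwards [isOpen_Ioo.mem_nhds ht] with s hs
      exact hv x s ⟨hx, hs⟩
    rw [h1]
    exact DW_comm (hF2 _ hq0) fT W' (hbrT (x, t))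
  -- differentiate the PDE at (x, t) in the direction of W'
  have hGdiff : DifferentiableAt ℝ (fun q k => Fld.DW (fXe ε k) F q) (x, t) :=
    differentiableAt_pi.2 fun k => hDW1d (fXe ε k) _ hq0
  have hpiG : fderiv ℝ (fun q k => Fld.DW (fXe ε k) F q) (x, t)
      = ContinuousLinearMap.pi (fun k => fderiv ℝ (Fld.DW (fXe ε k) F) (x, t)) :=
    fderiv_pi fun k => hDW1d (fXe ε k) _ hq0
  have haD : ∀ i j, DifferentiableAt ℝ
      (fun q => aCoef (fun k => Fld.DW (fXe ε k) F q) i j) (x, t) :=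
    fun i j => diff_aCoef_comp hGdiff i j
  have haval : ∀ i j, fderiv ℝ (fun q => aCoef (fun k => Fld.DW (fXe ε k) F q) i j)
        (x, t) (W'.V (x, t))
      = ∑ k, Fld.DW W' (Fld.DW (fXe ε k) F) (x, t)
          * aCoefD k (fun k' => Fld.DW (fXe ε k') F (x, t)) i j := by
    intro i j
    have h0 := fderiv_aCoef_comp hGdiff i j (W'.V (x, t))
    rw [hpiG] at h0
    simp only [ContinuousLinearMap.pi_apply] at h0
    exact h0
  have hQd : HasFDerivAt
      (fun q => ∑ i, ∑ j, aCoef (fun k => Fld.DW (fXe ε k) F q) i j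
        * Fld.DW (fXe ε i) (Fld.DW (fXe ε j) F) q)
      (∑ i : Fin 3, ∑ j : Fin 3,
        (aCoef (fun k => Fld.DW (fXe ε k) F (x, t)) i j
            • fderiv ℝ (Fld.DW (fXe ε i) (Fld.DW (fXe ε j) F)) (x, t)
          + Fld.DW (fXe ε i) (Fld.DW (fXe ε j) F) (x, t)
            • fderiv ℝ (fun q => aCoef (fun k => Fld.DW (fXe ε k) F q) i j) (x, t)))
      (x, t) := by
    apply HasFDerivAt.fun_sum; intro i _
    apply HasFDerivAt.fun_sum; intro j _
    exact (haD i j).hasFDerivAt.mul (hDW2d (fXe ε i) (fXe ε j) _ hq0).hasFDerivAt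
  have hbig : Fld.DW W' (Fld.DW fT F) (x, t)
      = ∑ i : Fin 3, ∑ j : Fin 3,
          (aCoef (fun k => Fld.DW (fXe ε k) F (x, t)) i j
              * Fld.DW W' (Fld.DW (fXe ε i) (Fld.DW (fXe ε j) F)) (x, t)
            + Fld.DW (fXe ε i) (Fld.DW (fXe ε j) F) (x, t)
              * ∑ k, Fld.DW W' (Fld.DW (fXe ε k) F) (x, t)
                  * aCoefD k (fun k' => Fld.DW (fXe ε k') F (x, t)) i j) := by
    have hEq : Fld.DW fT F =ᶠ[nhds (x, t)]
        (fun q => ∑ i, ∑ j, aCoef (fun k => Fld.DW (fXe ε k) F q) i j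
          * Fld.DW (fXe ε i) (Fld.DW (fXe ε j) F) q) := by
      filter_upwards [hUo.mem_nhds hq0] with q hq
      exact hpde' q hq
    have h1 : Fld.DW W' (Fld.DW fT F) (x, t)
        = fderiv ℝ (Fld.DW fT F) (x, t) (W'.V (x, t)) := rfl
    rw [h1, hEq.fderiv_eq, hQd.fderiv]
    simp only [ContinuousLinearMap.sum_apply, ContinuousLinearMap.add_apply,
      ContinuousLinearMap.coe_smul', Pi.smul_apply, smul_eq_mul]
    refine Finset.sum_congr rfl fun i _ => Finset.sum_congr rfl fun j _ => ?_
    rw [haval i j]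
    rfl
  -- put everything together
  rw [hdv, hbig]
  simp only [hgrad x t hq0, hgv3, hgv1, hXe2 x t hq0]
  simp only [Fin.sum_univ_three]
  ring

end Aux

/-- If `u ∈ C³` solves the ε-mean curvature flow equation on the Heisenberg group,
then `v₀ = ∂_t u` and `v_h = X_h^r u` (h = 1,2,3) each solve the linearized equation
`∂_t v = Σ a_{ij}(∇_ε u) X_i^ε X_j^ε v + Σ (∂_{ξ_k} a_{ij})(∇_ε u) X_i^ε X_j^ε u X_k^ε v`. -/
theorem statement_9 (ε : ℝ) (hε : ε ∈ Ioc (0 : ℝ) 1) (Ω : Set Pt) (hΩ : IsOpen Ω)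
    (T : ℝ) (hT : 0 < T) (u : Pt → ℝ → ℝ)
    (hu : ContDiffOn ℝ 3 (fun q : Pt × ℝ => u q.1 q.2) (Ω ×ˢ Ioo 0 T))
    (hpde : ∀ x ∈ Ω, ∀ t ∈ Ioo (0 : ℝ) T,
      deriv (u x) t = ∑ i, ∑ j, aCoef (gradE ε (fun y => u y t) x) i j *
        Xe ε i (Xe ε j (fun y => u y t)) x) :
    ∀ v : Pt → ℝ → ℝ,
      ((v = fun x t => deriv (u x) t) ∨ ∃ h : Fin 3, v = fun x t => XR h (fun y => u y t) x) →
      ∀ x ∈ Ω, ∀ t ∈ Ioo (0 : ℝ) T,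
        deriv (v x) t =
          (∑ i, ∑ j, aCoef (gradE ε (fun y => u y t) x) i j *
            Xe ε i (Xe ε j (fun y => v y t)) x) +
          ∑ i, ∑ j, ∑ k, aCoefD k (gradE ε (fun y => u y t) x) i j *
            Xe ε i (Xe ε j (fun y => u y t)) x * Xe ε k (fun y => v y t) x := by
  have hUo : IsOpen (Ω ×ˢ Ioo (0:ℝ) T) := hΩ.prod isOpen_Ioo
  have hFdiff : ∀ y s, (y, s) ∈ Ω ×ˢ Ioo (0:ℝ) T →
      DifferentiableAt ℝ (fun q : Pt × ℝ => u q.1 q.2) (y, s) := fun y s hq =>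
    (hu.contDiffAt (hUo.mem_nhds hq)).differentiableAt (by norm_num)
  rintro v (rfl | ⟨h, rfl⟩) x hx t ht
  · exact key ε Ω hΩ T u hu hpde fT (fun i q => br_XeT ε i q) (fun q => rfl) _
      (fun y s hq => deriv_eq_DW (hFdiff y s hq) (Filter.Eventually.of_forall fun s' => rfl))
      x hx t ht
  · exact key ε Ω hΩ T u hu hpde (fXR h) (fun i q => br_XeXR ε i h q)
      (fun q => br_TXR h q) _
      (fun y s hq => XR_eq_DW (hFdiff y s hq) (Filter.Eventually.of_forall fun z => rfl) h)
      x hx t ht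

end
end

section
/- Let ε ∈ (0,1], Ω ⊂ ℝ³ open, T > 0, and let u ∈ C³(Ω×(0,T)) solve the mean curvature flow equation ∂_t u = Σ_{i,j=1}^3 a_{ij}(∇_ε u) X_i^ε X_j^ε u on the Heisenberg group. Then for each k ∈ {1,2,3} the function v_k = X_k^r u solves the divergence-form equation −∂_t v_k + Σ_{i,j=1}^3 X_i^ε( a_{ij}(∇_ε u) X_j^ε v_k ) + Σ_{i,j,h=1}^3 a^{ijh}(∇_ε u) · (X_i^ε X_j^ε u) · X_h^ε v_k = 0 on Ω×(0,T), where a^{ijh}(ξ) = ∂_{ξ_h} a_{ij}(ξ) − ∂_{ξ_j} a_{ih}(ξ). -/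
open Real Set Finset

noncomputable section

/-! ### Basic lemmas on Euclidean partial derivatives -/

theorem pd_congr {f g : Pt → ℝ} {x : Pt} (h : f =ᶠ[nhds x] g) (i : Fin 3) :
    pd i f x = pd i g x := by
  unfold pd; rw [h.fderiv_eq]

theorem pd_add {f g : Pt → ℝ} {x : Pt} (hf : DifferentiableAt ℝ f x)
    (hg : DifferentiableAt ℝ g x) (i : Fin 3) :
    pd i (fun y => f y + g y) x = pd i f x + pd i g x := by
  unfold pd; rw [fderiv_fun_add hf hg]; simp

theorem pd_mul {f g : Pt → ℝ} {x : Pt} (hf : DifferentiableAt ℝ f x)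
    (hg : DifferentiableAt ℝ g x) (i : Fin 3) :
    pd i (fun y => f y * g y) x = pd i f x * g x + f x * pd i g x := by
  unfold pd; rw [fderiv_fun_mul hf hg]; simp; ring

theorem pd_const_mul {f : Pt → ℝ} {x : Pt} (hf : DifferentiableAt ℝ f x) (c : ℝ) (i : Fin 3) :
    pd i (fun y => c * f y) x = c * pd i f x := by
  unfold pd; rw [fderiv_const_mul hf c]; simp

theorem pd_sum {n : ℕ} {f : Fin n → Pt → ℝ} {x : Pt}
    (hf : ∀ m, DifferentiableAt ℝ (f m) x) (i : Fin 3) :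
    pd i (fun y => ∑ m, f m y) x = ∑ m, pd i (f m) x := by
  unfold pd; rw [fderiv_fun_sum (fun m _ => hf m)]; simp

theorem differentiableAt_coord (j : Fin 3) (x : Pt) :
    DifferentiableAt ℝ (fun y : Pt => y j) x :=
  (ContinuousLinearMap.proj (R := ℝ) (φ := fun _ : Fin 3 => ℝ) j).differentiableAt

theorem pd_coord (i j : Fin 3) (x : Pt) :
    pd i (fun y : Pt => y j) x = if i = j then 1 else 0 := by
  unfold pd
  have : (fun y : Pt => y j) = (ContinuousLinearMap.proj (R := ℝ) (φ := fun _ : Fin 3 => ℝ) j) := rfl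
  rw [this, ContinuousLinearMap.fderiv]
  simp [ContinuousLinearMap.proj, Pi.single_apply, eq_comm]

theorem DifferentiableAt.pd_fun {f : Pt → ℝ} {x : Pt} (hf : ContDiffAt ℝ 2 f x) (j : Fin 3) :
    DifferentiableAt ℝ (pd j f) x := by
  have hdiff : DifferentiableAt ℝ (fderiv ℝ f) x :=
    (hf.fderiv_right (m := 1) (by norm_num)).differentiableAt (by norm_num)
  exact hdiff.clm_apply (differentiableAt_const _)

theorem pd_comm {f : Pt → ℝ} {x : Pt} (hf : ContDiffAt ℝ 2 f x) (i j : Fin 3) :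
    pd i (pd j f) x = pd j (pd i f) x := by
  have hsymm := hf.isSymmSndFDerivAt (by simp)
  have hdiff : DifferentiableAt ℝ (fderiv ℝ f) x :=
    (hf.fderiv_right (m := 1) (by norm_num)).differentiableAt (by norm_num)
  have key : pd i (pd j f) x = fderiv ℝ (fderiv ℝ f) x (Pi.single i 1) (Pi.single j 1) := by
    show fderiv ℝ (fun y => fderiv ℝ f y (Pi.single j 1)) x (Pi.single i 1) = _
    rw [fderiv_clm_apply hdiff (differentiableAt_const _)]
    simp
  have key2 : pd j (pd i f) x = fderiv ℝ (fderiv ℝ f) x (Pi.single j 1) (Pi.single i 1) := by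
    show fderiv ℝ (fun y => fderiv ℝ f y (Pi.single i 1)) x (Pi.single j 1) = _
    rw [fderiv_clm_apply hdiff (differentiableAt_const _)]
    simp
  rw [key, key2, hsymm]

/-! ### Affine vector fields -/

def cf (a : Fin 3 → ℝ) (b : Fin 3 → Fin 3 → ℝ) (m : Fin 3) (x : Pt) : ℝ := a m + ∑ n, b m n * x n

def VF (a : Fin 3 → ℝ) (b : Fin 3 → Fin 3 → ℝ) (f : Pt → ℝ) (x : Pt) : ℝ :=
  ∑ m, cf a b m x * pd m f x

theorem contDiff_cf (a : Fin 3 → ℝ) (b : Fin 3 → Fin 3 → ℝ) (m : Fin 3) {n : WithTop ℕ∞} :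
    ContDiff ℝ n (cf a b m) := by
  unfold cf
  exact contDiff_const.add (ContDiff.sum fun i _ => contDiff_const.mul
    ((ContinuousLinearMap.proj (R := ℝ) (φ := fun _ : Fin 3 => ℝ) i).contDiff))

theorem differentiableAt_cf (a : Fin 3 → ℝ) (b : Fin 3 → Fin 3 → ℝ) (m : Fin 3) (x : Pt) :
    DifferentiableAt ℝ (cf a b m) x :=
  (contDiff_cf a b m (n := 1)).differentiable (by norm_num) x

theorem pd_cf (a : Fin 3 → ℝ) (b : Fin 3 → Fin 3 → ℝ) (m p : Fin 3) (x : Pt) :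
    pd p (cf a b m) x = b m p := by
  unfold cf
  rw [pd_add (differentiableAt_const _) (by
    exact DifferentiableAt.fun_sum fun i _ => (differentiableAt_const _).fun_mul (differentiableAt_coord i x))]
  rw [show pd p (fun _ : Pt => a m) x = 0 by
    unfold pd; rw [fderiv_fun_const]; simp]
  rw [pd_sum (fun n => (differentiableAt_const _).fun_mul (differentiableAt_coord n x))]
  have : ∀ n : Fin 3, pd p (fun y => b m n * y n) x = b m n * if p = n then 1 else 0 := by
    intro n; rw [pd_const_mul (differentiableAt_coord n x), pd_coord]
  simp only [this, Fin.sum_univ_three]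
  fin_cases p <;> simp

theorem VF_congr {f g : Pt → ℝ} {x : Pt} (h : f =ᶠ[nhds x] g) (a : Fin 3 → ℝ)
    (b : Fin 3 → Fin 3 → ℝ) : VF a b f x = VF a b g x := by
  unfold VF; exact Finset.sum_congr rfl fun m _ => by rw [pd_congr h]

theorem VF_contDiffAt {f : Pt → ℝ} {x : Pt} {n : ℕ} (hf : ContDiffAt ℝ (n + 1) f x)
    (a : Fin 3 → ℝ) (b : Fin 3 → Fin 3 → ℝ) : ContDiffAt ℝ n (VF a b f) x := by
  unfold VF
  refine ContDiffAt.sum fun m _ => ContDiffAt.mul ((contDiff_cf a b m).contDiffAt) ?_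
  have h1 : ContDiffAt ℝ n (fderiv ℝ f) x := hf.fderiv_right (by norm_cast)
  exact h1.clm_apply contDiffAt_const

theorem VF_differentiableAt {f : Pt → ℝ} {x : Pt} (hf : ContDiffAt ℝ 2 f x)
    (a : Fin 3 → ℝ) (b : Fin 3 → Fin 3 → ℝ) : DifferentiableAt ℝ (VF a b f) x := by
  have : ContDiffAt ℝ 1 (VF a b f) x := VF_contDiffAt (n := 1) (by exact_mod_cast hf) a b
  exact this.differentiableAt (by norm_num)

theorem VF_cd2 {f : Pt → ℝ} {x : Pt} (hf : ContDiffAt ℝ 3 f x)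
    (a : Fin 3 → ℝ) (b : Fin 3 → Fin 3 → ℝ) : ContDiffAt ℝ 2 (VF a b f) x := by
  have h : ContDiffAt ℝ ((2 : ℕ) + 1) f x := by exact_mod_cast hf
  have := VF_contDiffAt (n := 2) h a b
  exact_mod_cast this

theorem VF_mul {f g : Pt → ℝ} {x : Pt} (hf : DifferentiableAt ℝ f x)
    (hg : DifferentiableAt ℝ g x) (a : Fin 3 → ℝ) (b : Fin 3 → Fin 3 → ℝ) :
    VF a b (fun y => f y * g y) x = VF a b f x * g x + f x * VF a b g x := by
  unfold VF
  have : ∀ m : Fin 3, pd m (fun y => f y * g y) x = pd m f x * g x + f x * pd m g x :=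
    fun m => pd_mul hf hg m
  simp only [this, Fin.sum_univ_three]; ring

theorem VF_sum {n : ℕ} {f : Fin n → Pt → ℝ} {x : Pt}
    (hf : ∀ m, DifferentiableAt ℝ (f m) x) (a : Fin 3 → ℝ) (b : Fin 3 → Fin 3 → ℝ) :
    VF a b (fun y => ∑ m, f m y) x = ∑ m, VF a b (f m) x := by
  unfold VF
  have : ∀ p : Fin 3, pd p (fun y => ∑ m, f m y) x = ∑ m, pd p (f m) x := fun p => pd_sum hf p
  simp only [this, Finset.mul_sum]
  exact Finset.sum_comm

theorem pd_VF {f : Pt → ℝ} {x : Pt} (hf : ContDiffAt ℝ 2 f x) (a : Fin 3 → ℝ)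
    (b : Fin 3 → Fin 3 → ℝ) (p : Fin 3) :
    pd p (VF a b f) x = ∑ m, (b m p * pd m f x + cf a b m x * pd p (pd m f) x) := by
  unfold VF
  rw [pd_sum (fun m => (differentiableAt_cf a b m x).fun_mul (DifferentiableAt.pd_fun hf m))]
  exact Finset.sum_congr rfl fun m _ => by
    rw [pd_mul (differentiableAt_cf a b m x) (DifferentiableAt.pd_fun hf m), pd_cf]

theorem VF_comm {f : Pt → ℝ} {x : Pt} (hf : ContDiffAt ℝ 2 f x) (a : Fin 3 → ℝ)
    (b : Fin 3 → Fin 3 → ℝ) (a' : Fin 3 → ℝ) (b' : Fin 3 → Fin 3 → ℝ)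
    (H : ∀ m', ∑ m, cf a b m x * b' m' m = ∑ m, cf a' b' m x * b m' m) :
    VF a b (VF a' b' f) x = VF a' b' (VF a b f) x := by
  have h01 := pd_comm hf 0 1
  have h02 := pd_comm hf 0 2
  have h12 := pd_comm hf 1 2
  have H0 := H 0; have H1 := H 1; have H2 := H 2
  have e1 : ∀ m, pd m (VF a' b' f) x
      = ∑ m', (b' m' m * pd m' f x + cf a' b' m' x * pd m (pd m' f) x) :=
    fun m => pd_VF hf a' b' m
  have e2 : ∀ m, pd m (VF a b f) x
      = ∑ m', (b m' m * pd m' f x + cf a b m' x * pd m (pd m' f) x) :=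
    fun m => pd_VF hf a b m
  show (∑ m, cf a b m x * pd m (VF a' b' f) x) = ∑ m, cf a' b' m x * pd m (VF a b f) x
  simp only [e1, e2]
  simp only [Fin.sum_univ_three] at H0 H1 H2 ⊢
  linear_combination pd 0 f x * H0 + pd 1 f x * H1 + pd 2 f x * H2 +
    (cf a b 0 x * cf a' b' 1 x - cf a' b' 0 x * cf a b 1 x) * h01 +
    (cf a b 0 x * cf a' b' 2 x - cf a' b' 0 x * cf a b 2 x) * h02 +
    (cf a b 1 x * cf a' b' 2 x - cf a' b' 1 x * cf a b 2 x) * h12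

/-! ### The frames as affine vector fields -/

def ae (ε : ℝ) : Fin 3 → Fin 3 → ℝ := ![![1,0,0], ![0,1,0], ![0,0,2*ε]]
def be : Fin 3 → Fin 3 → Fin 3 → ℝ :=
  ![![![0,0,0],![0,0,0],![0,-1,0]], ![![0,0,0],![0,0,0],![1,0,0]],
    ![![0,0,0],![0,0,0],![0,0,0]]]
def arr : Fin 3 → Fin 3 → ℝ := ![![1,0,0], ![0,1,0], ![0,0,2]]
def brr : Fin 3 → Fin 3 → Fin 3 → ℝ :=
  ![![![0,0,0],![0,0,0],![0,1,0]], ![![0,0,0],![0,0,0],![-1,0,0]],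
    ![![0,0,0],![0,0,0],![0,0,0]]]

theorem Xe_eq (ε : ℝ) (i : Fin 3) (f : Pt → ℝ) (x : Pt) :
    Xe ε i f x = VF (ae ε i) (be i) f x := by
  fin_cases i <;>
    simp [Xe, X1, X2, X3, VF, cf, ae, be, Fin.sum_univ_three] <;> ring

theorem XR_eq (k : Fin 3) (f : Pt → ℝ) (x : Pt) :
    XR k f x = VF (arr k) (brr k) f x := by
  fin_cases k <;>
    simp [XR, X1r, X2r, X3r, VF, cf, arr, brr, Fin.sum_univ_three] <;> ring

theorem comm_cond (ε : ℝ) (k i : Fin 3) (x : Pt) (m' : Fin 3) :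
    ∑ m, cf (arr k) (brr k) m x * be i m' m = ∑ m, cf (ae ε i) (be i) m x * brr k m' m := by
  simp only [cf, Fin.sum_univ_three]
  fin_cases k <;> fin_cases i <;> fin_cases m' <;>
    simp [arr, brr, ae, be]

/-! ### Smoothness of the coefficients and chain rule -/

theorem denom_ne (ξ : Pt) : (1 + ∑ k, ξ k ^ 2) ≠ 0 := by positivity

theorem contDiff_aCoef {n : WithTop ℕ∞} (i j : Fin 3) :
    ContDiff ℝ n (fun ξ : Pt => aCoef ξ i j) := by
  unfold aCoef
  refine contDiff_const.sub (ContDiff.div ?_ ?_ denom_ne)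
  · exact ((ContinuousLinearMap.proj (R := ℝ) (φ := fun _ : Fin 3 => ℝ) i).contDiff).mul
      ((ContinuousLinearMap.proj (R := ℝ) (φ := fun _ : Fin 3 => ℝ) j).contDiff)
  · exact contDiff_const.add (ContDiff.sum fun k _ =>
      ((ContinuousLinearMap.proj (R := ℝ) (φ := fun _ : Fin 3 => ℝ) k).contDiff).pow 2)

theorem differentiableAt_aCoef (i j : Fin 3) (ξ : Pt) :
    DifferentiableAt ℝ (fun η : Pt => aCoef η i j) ξ :=
  (contDiff_aCoef (n := 1) i j).differentiable (by norm_num) ξ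

theorem sum_single (v : Pt) : ∑ h, v h • (Pi.single h 1 : Pt) = v := by
  funext w
  simp [Finset.sum_apply, Pi.single_apply, Fin.sum_univ_three]

theorem pd_comp_aCoef {g : Pt → Pt} {x : Pt} (hg : ∀ h, DifferentiableAt ℝ (fun y => g y h) x)
    (i j p : Fin 3) :
    pd p (fun y => aCoef (g y) i j) x = ∑ h, aCoefD h (g x) i j * pd p (fun y => g y h) x := by
  have hgd : DifferentiableAt ℝ g x := differentiableAt_pi.2 hg
  have hcomp : fderiv ℝ (fun y => aCoef (g y) i j) x
      = (fderiv ℝ (fun η => aCoef η i j) (g x)).comp (fderiv ℝ g x) :=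
    fderiv_comp x (differentiableAt_aCoef i j (g x)) hgd
  have hpi : fderiv ℝ g x = ContinuousLinearMap.pi (fun h => fderiv ℝ (fun y => g y h) x) :=
    fderiv_pi hg
  unfold pd
  rw [hcomp]
  simp only [ContinuousLinearMap.comp_apply]
  set v : Pt := fderiv ℝ g x (Pi.single p 1) with hv
  have hvh : ∀ h, v h = fderiv ℝ (fun y => g y h) x (Pi.single p 1) := by
    intro h; rw [hv, hpi]; rfl
  calc fderiv ℝ (fun η => aCoef η i j) (g x) v
      = fderiv ℝ (fun η => aCoef η i j) (g x) (∑ h, v h • (Pi.single h 1 : Pt)) := by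
        rw [sum_single]
    _ = ∑ h, v h • fderiv ℝ (fun η => aCoef η i j) (g x) ((Pi.single h 1 : Pt)) := by
        rw [map_sum]; exact Finset.sum_congr rfl fun h _ => by rw [ContinuousLinearMap.map_smul]
    _ = ∑ h, aCoefD h (g x) i j * fderiv ℝ (fun y => g y h) x (Pi.single p 1) := by
        exact Finset.sum_congr rfl fun h _ => by
          rw [hvh h]; unfold aCoefD; simp [smul_eq_mul]; ring

theorem VF_comp_aCoef {g : Pt → Pt} {x : Pt} (hg : ∀ h, DifferentiableAt ℝ (fun y => g y h) x)
    (i j : Fin 3) (a : Fin 3 → ℝ) (b : Fin 3 → Fin 3 → ℝ) :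
    VF a b (fun y => aCoef (g y) i j) x = ∑ h, aCoefD h (g x) i j * VF a b (fun y => g y h) x := by
  unfold VF
  simp only [pd_comp_aCoef hg i j]
  simp only [Finset.mul_sum]
  rw [Finset.sum_comm]
  exact Finset.sum_congr rfl fun h _ => Finset.sum_congr rfl fun m _ => by ring

/-! ### Time slices -/

theorem slice_contDiffAt {u : Pt → ℝ → ℝ} {y : Pt} {s : ℝ}
    (hF : ContDiffAt ℝ 3 (fun q : Pt × ℝ => u q.1 q.2) (y, s)) :
    ContDiffAt ℝ 3 (fun z => u z s) y := by
  have h : ContDiffAt ℝ 3 (fun z : Pt => (z, s)) y :=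
    (contDiff_id.prodMk contDiff_const).contDiffAt
  exact hF.comp y h

theorem slice_fderiv {u : Pt → ℝ → ℝ} {y : Pt} {s : ℝ}
    (hd : DifferentiableAt ℝ (fun q : Pt × ℝ => u q.1 q.2) (y, s)) (v : Pt) :
    fderiv ℝ (fun z => u z s) y v
      = fderiv ℝ (fun q : Pt × ℝ => u q.1 q.2) (y, s) (v, 0) := by
  have h : HasFDerivAt (fun z : Pt => u z s)
      ((fderiv ℝ (fun q : Pt × ℝ => u q.1 q.2) (y, s)).comp
        (ContinuousLinearMap.inl ℝ Pt ℝ)) y :=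
    hd.hasFDerivAt.comp (f := fun z : Pt => (z, s)) y (hasFDerivAt_prodMk_left y s)
  rw [h.fderiv]; rfl

theorem slice_deriv {u : Pt → ℝ → ℝ} {y : Pt} {s : ℝ}
    (hd : DifferentiableAt ℝ (fun q : Pt × ℝ => u q.1 q.2) (y, s)) :
    deriv (u y) s = fderiv ℝ (fun q : Pt × ℝ => u q.1 q.2) (y, s) (0, 1) := by
  have h : HasDerivAt (u y)
      (fderiv ℝ (fun q : Pt × ℝ => u q.1 q.2) (y, s) ((0 : Pt), (1 : ℝ))) s :=
    hd.hasFDerivAt.comp_hasDerivAt s ((hasDerivAt_const s y).prodMk (hasDerivAt_id s))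
  exact h.deriv

theorem deriv_VF_swap {u : Pt → ℝ → ℝ} {x : Pt} {t : ℝ}
    (hF : ContDiffAt ℝ 3 (fun q : Pt × ℝ => u q.1 q.2) (x, t))
    (a : Fin 3 → ℝ) (b : Fin 3 → Fin 3 → ℝ) :
    deriv (fun s => VF a b (fun y => u y s) x) t
      = VF a b (fun y => deriv (u y) t) x := by
  set F : Pt × ℝ → ℝ := fun q => u q.1 q.2 with hFdef
  set G : Pt × ℝ → (Pt × ℝ →L[ℝ] ℝ) := fderiv ℝ F with hGdef
  have hdEv : ∀ᶠ p in nhds (x, t), DifferentiableAt ℝ F p :=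
    (hF.eventually (by norm_num)).mono fun p hp => hp.differentiableAt (by norm_num)
  have hG : DifferentiableAt ℝ G (x, t) :=
    (hF.fderiv_right (m := 2) (by norm_num)).differentiableAt (by norm_num)
  have hsymm := hF.isSymmSndFDerivAt (by norm_num)
  set H2 := fderiv ℝ G (x, t) with hH2def
  set W : Pt × ℝ := ∑ m, cf a b m x • ((Pi.single m 1 : Pt), (0 : ℝ)) with hWdef
  have key : ∀ y s, DifferentiableAt ℝ F (y, s) →
      VF a b (fun z => u z s) y = G (y, s)
        (∑ m, cf a b m y • ((Pi.single m 1 : Pt), (0 : ℝ))) := by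
    intro y s hd
    unfold VF pd
    rw [map_sum]
    exact Finset.sum_congr rfl fun m _ => by
      rw [ContinuousLinearMap.map_smul, smul_eq_mul, slice_fderiv hd]
  have hev_t : ∀ᶠ s in nhds t, DifferentiableAt ℝ F (x, s) := by
    have hc : ContinuousAt (fun s : ℝ => ((x : Pt), s)) t :=
      (continuous_const.prodMk continuous_id).continuousAt
    exact hc.eventually hdEv
  have heq : (fun s => VF a b (fun y => u y s) x) =ᶠ[nhds t] (fun s => G (x, s) W) :=
    hev_t.mono fun s hd => key x s hd
  rw [heq.deriv_eq]
  have h1 : HasDerivAt (fun s => G (x, s)) (H2 ((0 : Pt), (1 : ℝ))) t :=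
    hG.hasFDerivAt.comp_hasDerivAt t ((hasDerivAt_const t x).prodMk (hasDerivAt_id t))
  have h2 : HasDerivAt (fun s => G (x, s) W) (H2 ((0 : Pt), (1 : ℝ)) W) t := by
    have := h1.clm_apply (hasDerivAt_const t W)
    simpa using this
  rw [h2.deriv]
  have hev_x : ∀ᶠ y in nhds x, DifferentiableAt ℝ F (y, t) := by
    have hc : ContinuousAt (fun y : Pt => (y, t)) x :=
      (continuous_id.prodMk continuous_const).continuousAt
    exact hc.eventually hdEv
  have heq2 : (fun y => deriv (u y) t) =ᶠ[nhds x] (fun y => G (y, t) ((0 : Pt), (1 : ℝ))) :=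
    hev_x.mono fun y hd => slice_deriv hd
  have hpd : ∀ m : Fin 3, pd m (fun y => deriv (u y) t) x
      = H2 ((Pi.single m 1 : Pt), (0 : ℝ)) ((0 : Pt), (1 : ℝ)) := by
    intro m
    unfold pd
    rw [heq2.fderiv_eq]
    have h3 : HasFDerivAt (fun y : Pt => G (y, t))
        (H2.comp (ContinuousLinearMap.inl ℝ Pt ℝ)) x :=
      hG.hasFDerivAt.comp x (hasFDerivAt_prodMk_left x t)
    have h4 := h3.clm_apply (hasFDerivAt_const ((0 : Pt), (1 : ℝ)) x)
    rw [h4.fderiv]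
    simp
  have hfin : VF a b (fun y => deriv (u y) t) x = H2 W ((0 : Pt), (1 : ℝ)) := by
    unfold VF
    simp only [hpd]
    rw [hWdef, map_sum, ContinuousLinearMap.sum_apply]
    exact Finset.sum_congr rfl fun m _ => by
      rw [ContinuousLinearMap.map_smul]; simp
  rw [hfin, hsymm.eq]

/-- If `u ∈ C³` solves the ε-mean curvature flow equation on the Heisenberg group,
then `v_k = X_k^r u` solves the divergence-form equation
`−∂_t v_k + Σ X_i^ε(a_{ij}(∇_ε u) X_j^ε v_k) + Σ a^{ijh}(∇_ε u) X_i^ε X_j^ε u X_h^ε v_k = 0`,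
where `a^{ijh} = ∂_{ξ_h}a_{ij} − ∂_{ξ_j}a_{ih}`. -/
theorem statement_10 (ε : ℝ) (hε : ε ∈ Ioc (0 : ℝ) 1) (Ω : Set Pt) (hΩ : IsOpen Ω)
    (T : ℝ) (hT : 0 < T) (u : Pt → ℝ → ℝ)
    (hu : ContDiffOn ℝ 3 (fun q : Pt × ℝ => u q.1 q.2) (Ω ×ˢ Ioo 0 T))
    (hpde : ∀ x ∈ Ω, ∀ t ∈ Ioo (0 : ℝ) T,
      deriv (u x) t = ∑ i, ∑ j, aCoef (gradE ε (fun y => u y t) x) i j *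
        Xe ε i (Xe ε j (fun y => u y t)) x) :
    ∀ k : Fin 3, ∀ x ∈ Ω, ∀ t ∈ Ioo (0 : ℝ) T,
      -deriv (fun s => XR k (fun y => u y s) x) t +
        (∑ i, ∑ j, Xe ε i (fun y => aCoef (gradE ε (fun z => u z t) y) i j *
            Xe ε j (fun z => XR k (fun w => u w t) z) y) x) +
        (∑ i, ∑ j, ∑ h,
          (aCoefD h (gradE ε (fun y => u y t) x) i j -
            aCoefD j (gradE ε (fun y => u y t) x) i h) *
          Xe ε i (Xe ε j (fun y => u y t)) x *
          Xe ε h (fun y => XR k (fun z => u z t) y) x) = 0 := by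
  intro k x hx t ht
  set U : Pt → ℝ := fun y => u y t with hUdef
  have hopen : IsOpen (Ω ×ˢ Ioo (0 : ℝ) T) := hΩ.prod isOpen_Ioo
  have hF : ContDiffAt ℝ 3 (fun q : Pt × ℝ => u q.1 q.2) (x, t) :=
    hu.contDiffAt (hopen.mem_nhds ⟨hx, ht⟩)
  have hFev : ∀ᶠ y in nhds x, ContDiffAt ℝ 3 (fun q : Pt × ℝ => u q.1 q.2) (y, t) := by
    have hc : ContinuousAt (fun y : Pt => (y, t)) x :=
      (continuous_id.prodMk continuous_const).continuousAt
    exact hc.eventually (hF.eventually (by norm_num))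
  have hUev : ∀ᶠ y in nhds x, ContDiffAt ℝ 3 U y := hFev.mono fun y h => slice_contDiffAt h
  have hU3 : ContDiffAt ℝ 3 U x := slice_contDiffAt hF
  have hU2 : ContDiffAt ℝ 2 U x := hU3.of_le (by norm_num)
  -- function rewriting lemmas
  have hXRf : ∀ f : Pt → ℝ, XR k f = VF (arr k) (brr k) f :=
    fun f => funext fun y => XR_eq k f y
  have hXef : ∀ (i : Fin 3) (f : Pt → ℝ), Xe ε i f = VF (ae ε i) (be i) f :=
    fun i f => funext fun y => Xe_eq ε i f y
  have hgf : ∀ h : Fin 3, (fun y => gradE ε U y h) = VF (ae ε h) (be h) U :=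
    fun h => funext fun y => (Xe_eq ε h U y : gradE ε U y h = _)
  -- differentiability facts
  have hgd : ∀ h : Fin 3, DifferentiableAt ℝ (fun y => gradE ε U y h) x := by
    intro h; rw [hgf h]; exact VF_differentiableAt hU2 _ _
  have hAd : ∀ i j : Fin 3, DifferentiableAt ℝ (fun y => aCoef (gradE ε U y) i j) x := by
    intro i j
    exact (differentiableAt_aCoef i j (gradE ε U x)).comp x (differentiableAt_pi.2 hgd)
  have hWcd : ∀ i j : Fin 3, DifferentiableAt ℝ (VF (ae ε i) (be i) (VF (ae ε j) (be j) U)) x :=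
    fun i j => VF_differentiableAt (VF_cd2 hU3 _ _) _ _
  have hrU2 : ContDiffAt ℝ 2 (VF (arr k) (brr k) U) x := VF_cd2 hU3 _ _
  have hQd : ∀ j : Fin 3,
      DifferentiableAt ℝ (VF (ae ε j) (be j) (VF (arr k) (brr k) U)) x :=
    fun j => VF_differentiableAt hrU2 _ _
  -- commutations
  have hcomm2 : ∀ h : Fin 3, VF (arr k) (brr k) (VF (ae ε h) (be h) U) x
      = VF (ae ε h) (be h) (VF (arr k) (brr k) U) x :=
    fun h => VF_comm hU2 _ _ _ _ (comm_cond ε k h x)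
  have hcomm3 : ∀ i j : Fin 3,
      VF (arr k) (brr k) (VF (ae ε i) (be i) (VF (ae ε j) (be j) U)) x
      = VF (ae ε i) (be i) (VF (ae ε j) (be j) (VF (arr k) (brr k) U)) x := by
    intro i j
    rw [VF_comm (VF_cd2 hU3 (ae ε j) (be j)) (arr k) (brr k) (ae ε i) (be i)
      (comm_cond ε k i x)]
    refine VF_congr ?_ _ _
    filter_upwards [hUev] with y hy
    exact VF_comm (hy.of_le (by norm_num)) (arr k) (brr k) (ae ε j) (be j) (comm_cond ε k j y)
  -- chain rule for the coefficient composed with the gradient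
  have hchain : ∀ (i j : Fin 3) (a : Fin 3 → ℝ) (b : Fin 3 → Fin 3 → ℝ),
      VF a b (fun y => aCoef (gradE ε U y) i j) x
      = ∑ h, aCoefD h (gradE ε U x) i j * VF a b (VF (ae ε h) (be h) U) x := by
    intro i j a b
    rw [VF_comp_aCoef hgd i j a b]
    exact Finset.sum_congr rfl fun h _ => by rw [hgf h]
  -- Expansion of the time-derivative term
  have E1 : deriv (fun s => XR k (fun y => u y s) x) t
      = ∑ i, ∑ j, ((∑ h, aCoefD h (gradE ε U x) i j
            * VF (ae ε h) (be h) (VF (arr k) (brr k) U) x)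
          * VF (ae ε i) (be i) (VF (ae ε j) (be j) U) x
        + aCoef (gradE ε U x) i j
          * VF (ae ε i) (be i) (VF (ae ε j) (be j) (VF (arr k) (brr k) U)) x) := by
    simp only [hXRf]
    rw [deriv_VF_swap hF (arr k) (brr k)]
    have ePDE : (fun y => deriv (u y) t) =ᶠ[nhds x]
        (fun y => ∑ i, ∑ j, aCoef (gradE ε U y) i j
          * VF (ae ε i) (be i) (VF (ae ε j) (be j) U) y) := by
      filter_upwards [hΩ.mem_nhds hx] with y hy
      rw [hpde y hy t ht]
      simp only [hXef]; rfl
    rw [VF_congr ePDE (arr k) (brr k)]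
    rw [VF_sum (f := fun i y => ∑ j, aCoef (gradE ε U y) i j
        * VF (ae ε i) (be i) (VF (ae ε j) (be j) U) y)
      (fun i => DifferentiableAt.fun_sum fun j _ => (hAd i j).fun_mul (hWcd i j)) _ _]
    refine Finset.sum_congr rfl fun i _ => ?_
    rw [VF_sum (f := fun j y => aCoef (gradE ε U y) i j
        * VF (ae ε i) (be i) (VF (ae ε j) (be j) U) y)
      (fun j => (hAd i j).fun_mul (hWcd i j)) _ _]
    refine Finset.sum_congr rfl fun j _ => ?_
    rw [VF_mul (hAd i j) (hWcd i j)]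
    rw [hchain i j, hcomm3 i j]
    simp only [hcomm2]
  -- Expansion of the divergence term
  have E2 : ∀ i j : Fin 3,
      Xe ε i (fun y => aCoef (gradE ε U y) i j * Xe ε j (fun z => XR k U z) y) x
      = (∑ h, aCoefD h (gradE ε U x) i j
            * VF (ae ε i) (be i) (VF (ae ε h) (be h) U) x)
          * VF (ae ε j) (be j) (VF (arr k) (brr k) U) x
        + aCoef (gradE ε U x) i j
          * VF (ae ε i) (be i) (VF (ae ε j) (be j) (VF (arr k) (brr k) U)) x := by
    intro i j
    have h1 : (fun z => XR k U z) = VF (arr k) (brr k) U := funext fun z => XR_eq k U z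
    rw [h1]
    simp only [hXef]
    rw [VF_mul (hAd i j) (hQd j)]
    rw [hchain i j]
  -- final rewriting
  simp only [E2]
  rw [E1]
  simp only [hXef, hXRf]
  simp only [Fin.sum_univ_three]
  ring

end
end
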